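/- arXiv:1701.07051 — 2 statements merged into one kernel-verified Lean document; each statement's English description precedes it below -/
import Mathlib

section
/- In a flow graph, if (e1,e2) and (e1,e3) are SESE regions with e2 ≠ e3 and e2 dominates e3, then (e2,e3) is a SESE region; in particular e3 postdominates e2. -/
variable {V : Type*}

/-- The path `p` traverses the edge `e`. -/
def Traverses (p : List V) (e : V × V) : Prop := e ∈ p.zip p.tail

/-- `p` is a directed path starting at `s`. -/
def IsPathFrom (E : V → V → Prop) (s : V) (p : List V) : Prop :=
  p.head? = some s ∧ p.Chain' E

/-- `p` is a directed path ending at `t`. -/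
def IsPathTo (E : V → V → Prop) (t : V) (p : List V) : Prop :=
  p.getLast? = some t ∧ p.Chain' E

/-- `p` is a directed path from `s` to `t`. -/
def IsSTPath (E : V → V → Prop) (s t : V) (p : List V) : Prop :=
  p.head? = some s ∧ p.getLast? = some t ∧ p.Chain' E

/-- `v` is a source: no incoming non-loop edges. -/
def IsSrcRel (E : V → V → Prop) (v : V) : Prop := ∀ u, u ≠ v → ¬E u v

/-- `v` is a target: no outgoing non-loop edges. -/
def IsTgtRel (E : V → V → Prop) (v : V) : Prop := ∀ u, u ≠ v → ¬E v u

/-- A flow graph: exactly one source `s` and one target `t`, a unique edge from `s`,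
a unique edge into `t`, and a path cover by source-to-target paths. -/
def IsFlowGraph (E : V → V → Prop) (s t : V) : Prop :=
  (∀ v, IsSrcRel E v ↔ v = s) ∧ (∀ v, IsTgtRel E v ↔ v = t) ∧
  (∃! x, E s x) ∧ (∃! x, E x t) ∧
  (∀ v, ∃ p : List V, IsSTPath E s t p ∧ v ∈ p)

/-- Edge `e` dominates edge `e'` (w.r.t. source `s`). -/
def EDom (E : V → V → Prop) (s : V) (e e' : V × V) : Prop :=
  ∀ p : List V, IsPathFrom E s p → Traverses p e' → Traverses p e

/-- Edge `e` postdominates edge `e'` (w.r.t. target `t`). -/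
def EPdom (E : V → V → Prop) (t : V) (e e' : V × V) : Prop :=
  ∀ p : List V, IsPathTo E t p → Traverses p e' → Traverses p e

/-- `c` is a (directed) cycle: the nonempty vertex list `c` together with the wrap-around
edge back to its head forms a closed chain. -/
def IsCycle (E : V → V → Prop) (c : List V) : Prop :=
  c ≠ [] ∧ List.Chain' E (c ++ c.take 1)

/-- The cycle `c` traverses edge `e` (including the wrap-around edge). -/
def CycTraverses (c : List V) (e : V × V) : Prop := Traverses (c ++ c.take 1) e

/-- `(e1, e2)` is a SESE (single-entry/single-exit) region: `e1` dominates `e2`, `e2`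
postdominates `e1`, and every cycle contains `e1` iff it contains `e2`. -/
def SESE (E : V → V → Prop) (s t : V) (e1 e2 : V × V) : Prop :=
  EDom E s e1 e2 ∧ EPdom E t e2 e1 ∧
  ∀ c : List V, IsCycle E c → (CycTraverses c e1 ↔ CycTraverses c e2)

theorem traverses_cons_cons {x y : V} {L : List V} {e : V × V} :
    Traverses (x :: y :: L) e ↔ e = (x, y) ∨ Traverses (y :: L) e := by
  simp [Traverses, List.zip_cons_cons]

theorem traverses_iff {p : List V} {e : V × V} :
    Traverses p e ↔ ∃ l1 l2, p = l1 ++ e.1 :: e.2 :: l2 := by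
  induction p with
  | nil => simp [Traverses]
  | cons x xs ih =>
    cases xs with
    | nil =>
      simp only [Traverses, List.tail_cons, List.zip_nil_right, List.not_mem_nil, false_iff]
      rintro ⟨l1, l2, h⟩
      rcases l1 with _ | ⟨y, l1⟩ <;> simp_all
    | cons y ys =>
      rw [traverses_cons_cons, ih]
      constructor
      · rintro (rfl | ⟨l1, l2, h⟩)
        · exact ⟨[], ys, rfl⟩
        · exact ⟨x :: l1, l2, by simp [h]⟩
      · rintro ⟨l1, l2, h⟩
        rcases l1 with _ | ⟨z, l1⟩
        · left; simp at h; simp [h.1, h.2.1, Prod.ext_iff]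
        · right; simp at h; exact ⟨l1, l2, h.2⟩

theorem edges_glue (l : List V) (x : V) (l' : List V) :
    (l ++ x :: l').zip (l ++ x :: l').tail =
      (l ++ [x]).zip (l ++ [x]).tail ++ (x :: l').zip l' := by
  induction l with
  | nil => simp
  | cons y l ih =>
    cases l with
    | nil => simp
    | cons z l => simpa using ih

theorem traverses_glue {q p : List V} {v : V} (hq : q.getLast? = some v)
    (hp : p.head? = some v) (e : V × V) :
    Traverses (q ++ p.tail) e ↔ Traverses q e ∨ Traverses p e := by
  obtain ⟨q', rfl⟩ : ∃ q', q = q' ++ [v] := List.getLast?_eq_some_iff.mp hq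
  rcases p with _ | ⟨w, p'⟩
  · simp at hp
  · have hv : w = v := by simpa using hp
    subst hv
    rw [show (q' ++ [w]) ++ (w :: p').tail = q' ++ w :: p' by simp]
    rw [Traverses, edges_glue, List.mem_append]
    rfl

theorem chain'_glue {E : V → V → Prop} {q p : List V} {v : V} (hq : q.getLast? = some v)
    (hp : p.head? = some v) (hcq : q.Chain' E) (hcp : p.Chain' E) :
    (q ++ p.tail).Chain' E := by
  obtain ⟨q', rfl⟩ : ∃ q', q = q' ++ [v] := List.getLast?_eq_some_iff.mp hq
  rcases p with _ | ⟨w, p'⟩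
  · simp at hp
  · have hv : w = v := by simpa using hp
    subst hv
    rw [show (q' ++ [w]) ++ (w :: p').tail = q' ++ w :: p' by simp]
    simp only [List.Chain', List.isChain_append] at hcq ⊢
    exact ⟨hcq.1, hcp, by simpa using hcq.2.2⟩

/-- Key descent lemma: under the SESE hypotheses, if there is a path `psuf` from
`e2.1` to `t` starting with the edge `e2` and avoiding `e3`, then no `s`-path can end
at `e2.1`. -/
theorem descent {E : V → V → Prop} {s t : V} {e1 e2 e3 : V × V}
    (h12a : EDom E s e1 e2) (h13b : EPdom E t e3 e1) (hdom : EDom E s e2 e3)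
    {psuf : List V} (hhead : psuf.head? = some e2.1) (hlast : psuf.getLast? = some t)
    (hchain : psuf.Chain' E) (htrav : Traverses psuf e2) (havoid : ¬ Traverses psuf e3) :
    ∀ n (q : List V), q.length ≤ n → IsPathFrom E s q → q.getLast? = some e2.1 → False := by
  intro n
  induction n with
  | zero =>
    intro q hlen hq hqa
    interval_cases h : q.length
    · rw [List.length_eq_zero_iff] at h; subst h; simp at hqa
  | succ n ih =>
    intro q hlen hq hqa
    -- glue q with psuf
    have hrpath : IsPathFrom E s (q ++ psuf.tail) := by
      constructor
      · rcases q with _ | ⟨x, q'⟩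
        · simp at hqa
        · simpa using hq.1
      · exact chain'_glue hqa hhead hq.2 hchain
    have hrlast : (q ++ psuf.tail).getLast? = some t := by
      obtain ⟨q', rfl⟩ : ∃ q', q = q' ++ [e2.1] := List.getLast?_eq_some_iff.mp hqa
      rcases psuf with _ | ⟨w, p'⟩
      · simp at hhead
      · have hw : w = e2.1 := by simpa using hhead
        subst hw
        rw [show (q' ++ [e2.1]) ++ (e2.1 :: p').tail = q' ++ e2.1 :: p' by simp]
        rw [List.getLast?_append, hlast]
        rfl
    have htr2 : Traverses (q ++ psuf.tail) e2 :=
      (traverses_glue hqa hhead e2).mpr (Or.inr htrav)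
    have htr1 : Traverses (q ++ psuf.tail) e1 := h12a _ hrpath htr2
    have htr3 : Traverses (q ++ psuf.tail) e3 := h13b _ ⟨hrlast, hrpath.2⟩ htr1
    have hq3 : Traverses q e3 := by
      rcases (traverses_glue hqa hhead e3).mp htr3 with h | h
      · exact h
      · exact absurd h havoid
    have hq2 : Traverses q e2 := hdom q hq hq3
    obtain ⟨l1, l2, rfl⟩ := traverses_iff.mp hq2
    refine ih (l1 ++ [e2.1]) ?_ ⟨?_, ?_⟩ ?_
    · simp only [List.length_append, List.length_cons, List.length_nil] at hlen ⊢
      omega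
    · rcases l1 with _ | ⟨x, l1⟩ <;> simpa using hq.1
    · exact hq.2.prefix ⟨e2.2 :: l2, by simp⟩
    · simp

/-- In a flow graph, if `(e1,e2)` and `(e1,e3)` are SESE regions with `e2 ≠ e3` and
`e2` dominating `e3`, then `(e2,e3)` is a SESE region; in particular `e3` postdominates
`e2`. -/
theorem stmt9 {V : Type*} [Fintype V] (E : V → V → Prop) (s t : V)
    (hFG : IsFlowGraph E s t) (e1 e2 e3 : V × V)
    (h12 : SESE E s t e1 e2) (h13 : SESE E s t e1 e3)
    (hne : e2 ≠ e3) (hdom : EDom E s e2 e3) :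
    SESE E s t e2 e3 ∧ EPdom E t e3 e2 := by
  obtain ⟨h12a, h12b, h12c⟩ := h12
  obtain ⟨h13a, h13b, h13c⟩ := h13
  have hpdom : EPdom E t e3 e2 := by
    intro p hp htrav
    by_contra havoid
    -- extract the suffix of p starting at the traversal of e2
    obtain ⟨l1, l2, rfl⟩ := traverses_iff.mp htrav
    set psuf : List V := e2.1 :: e2.2 :: l2 with hpsuf
    have hhead : psuf.head? = some e2.1 := rfl
    have hlast : psuf.getLast? = some t := by
      have h1 := hp.1
      rw [List.getLast?_append] at h1
      rcases h : psuf.getLast? with _ | x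
      · exact absurd (List.getLast?_eq_none_iff.mp h) (by simp [hpsuf])
      · rw [h] at h1; simpa using h1
    have hchain : psuf.Chain' E := hp.2.suffix ⟨l1, rfl⟩
    have htrav2 : Traverses psuf e2 := traverses_iff.mpr ⟨[], l2, rfl⟩
    have havoid2 : ¬ Traverses psuf e3 := by
      intro h
      obtain ⟨m1, m2, hm⟩ := traverses_iff.mp h
      refine havoid (traverses_iff.mpr ⟨l1 ++ m1, m2, ?_⟩)
      rw [hpsuf] at hm
      rw [show (l1 ++ psuf : List V) = l1 ++ (e2.1 :: e2.2 :: l2) from rfl, hm]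
      simp
    -- get an s-path ending at e2.1 from the path cover
    obtain ⟨Q, hQ, hmem⟩ := hFG.2.2.2.2 e2.1
    obtain ⟨m1, m2, rfl⟩ := List.append_of_mem hmem
    have hq : IsPathFrom E s (m1 ++ [e2.1]) := by
      constructor
      · rcases m1 with _ | ⟨x, m1⟩ <;> simpa using hQ.1
      · exact hQ.2.2.prefix ⟨m2, by simp⟩
    exact descent h12a h13b hdom hhead hlast hchain htrav2 havoid2
      (m1 ++ [e2.1]).length _ le_rfl hq (by simp)
  refine ⟨⟨hdom, hpdom, ?_⟩, hpdom⟩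
  intro c hc
  exact (h12c c hc).symm.trans (h13c c hc)
end

section
/- Define a digraph S on the edges of a flow graph by putting an arc from e1 to e2 whenever (e1,e2) is a nondegenerate SESE region. Then every weakly connected component of S (with at least one arc) is a transitive tournament; in particular it has a unique source, a unique target, and a unique length-1 path from its source to its target. -/
variable {V : Type*}

/-- The arc relation of the digraph `S` on the edges of the flow graph: an arc from `e`
to `e'` whenever `(e, e')` is a nondegenerate SESE region (between actual edges). -/
def SArc (E : V → V → Prop) (s t : V) (e e' : V × V) : Prop :=
  E e.1 e.2 ∧ E e'.1 e'.2 ∧ e ≠ e' ∧ SESE E s t e e'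

/-- Weak connectivity: the reflexive-transitive closure of the symmetrization. -/
def WConn {α : Type*} (R : α → α → Prop) : α → α → Prop :=
  Relation.ReflTransGen (fun a b => R a b ∨ R b a)

section Aux

variable {E : V → V → Prop} {s t : V}

theorem trav_nil {e : V × V} : ¬ Traverses ([] : List V) e := by simp [Traverses]

theorem trav_cons_cons {x y : V} {l : List V} {e : V × V} :
    Traverses (x :: y :: l) e ↔ e = (x, y) ∨ Traverses (y :: l) e := by
  simp [Traverses]

theorem trav_iff : ∀ (p : List V) (e : V × V),
    Traverses p e ↔ ∃ l1 l2, p = l1 ++ e.1 :: e.2 :: l2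
  | [], e => by
      constructor
      · intro h; exact absurd h trav_nil
      · rintro ⟨l1, l2, h⟩; exact absurd h (by simp)
  | [x], e => by
      constructor
      · intro h; simp [Traverses] at h
      · rintro ⟨l1, l2, h⟩
        rcases l1 with _ | ⟨z, l1⟩ <;> simp_all
  | x :: y :: l, e => by
      rw [trav_cons_cons]
      constructor
      · rintro (rfl | h)
        · exact ⟨[], l, by simp⟩
        · obtain ⟨l1, l2, h⟩ := (trav_iff (y :: l) e).1 h
          exact ⟨x :: l1, l2, by simp [h]⟩
      · rintro ⟨l1, l2, h⟩
        rcases l1 with _ | ⟨z, l1⟩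
        · simp at h
          exact Or.inl (by ext <;> simp [h.1, h.2.1])
        · simp at h
          exact Or.inr ((trav_iff (y :: l) e).2 ⟨l1, l2, by simp [h.2]⟩)

theorem trav_append_left {l1 l2 : List V} {e : V × V} (h : Traverses l1 e) :
    Traverses (l1 ++ l2) e := by
  obtain ⟨m1, m2, rfl⟩ := (trav_iff _ _).1 h
  exact (trav_iff _ _).2 ⟨m1, m2 ++ l2, by simp⟩

theorem trav_append_right {l1 l2 : List V} {e : V × V} (h : Traverses l2 e) :
    Traverses (l1 ++ l2) e := by
  obtain ⟨m1, m2, rfl⟩ := (trav_iff _ _).1 h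
  exact (trav_iff _ _).2 ⟨l1 ++ m1, m2, by simp⟩

theorem trav_cons {x : V} {q : List V} {e : V × V} (h : Traverses q e) :
    Traverses (x :: q) e := trav_append_right (l1 := [x]) h

theorem trav_split {v : V} {l2 : List V} {e : V × V} :
    ∀ (l1 : List V), Traverses (l1 ++ v :: l2) e →
      Traverses (l1 ++ [v]) e ∨ Traverses (v :: l2) e := by
  intro l1
  induction l1 with
  | nil => intro h; exact Or.inr (by simpa using h)
  | cons x l1 ih =>
    intro h
    rcases l1 with _ | ⟨y, l1'⟩
    · rcases trav_cons_cons.1 h with h1 | h2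
      · exact Or.inl (trav_cons_cons.2 (Or.inl h1))
      · exact Or.inr h2
    · rcases trav_cons_cons.1 h with h1 | h2
      · exact Or.inl (trav_cons_cons.2 (Or.inl h1))
      · rcases ih h2 with h3 | h4
        · exact Or.inl (trav_cons h3)
        · exact Or.inr h4


variable {E : V → V → Prop} {s t : V}

theorem pathFrom_append_left {m1 m2 : List V} (h : IsPathFrom E s (m1 ++ m2))
    (hm : m1 ≠ []) : IsPathFrom E s m1 := by
  obtain ⟨h1, h2⟩ := h
  refine ⟨?_, (List.isChain_append.mp h2).1⟩
  rcases m1 with _ | ⟨c, m⟩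
  · exact absurd rfl hm
  · simpa using h1

theorem pathTo_append_right {m1 m2 : List V} {c : V} (h : IsPathTo E t (m1 ++ c :: m2)) :
    IsPathTo E t (c :: m2) := by
  obtain ⟨h1, h2⟩ := h
  rw [List.getLast?_append_cons] at h1
  exact ⟨h1, (List.isChain_append.mp h2).2.1⟩

theorem chain_link {l1 l2 : List V} {x y : V} (h1 : List.Chain' E (l1 ++ [x]))
    (h2 : List.Chain' E (y :: l2)) (hxy : E x y) :
    List.Chain' E (l1 ++ x :: y :: l2) := by
  have he : l1 ++ x :: y :: l2 = (l1 ++ [x]) ++ (y :: l2) := by simp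
  rw [he, List.Chain', List.isChain_append]
  refine ⟨h1, h2, ?_⟩
  intro u hu v hv
  rw [List.getLast?_concat] at hu
  simp at hu hv
  rw [← hu, ← hv]
  exact hxy

theorem glue_path {l1 l2 : List V} {a1 a2 : V}
    (hp : IsPathFrom E s (l1 ++ [a1, a2])) (hq : IsPathTo E t (a1 :: a2 :: l2)) :
    IsSTPath E s t (l1 ++ a1 :: a2 :: l2) := by
  have hE : E a1 a2 := (List.isChain_cons_cons.mp hq.2).1
  have C1 : List.Chain' E (l1 ++ [a1]) := by
    have := hp.2
    rw [show l1 ++ [a1, a2] = (l1 ++ [a1]) ++ [a2] by simp, List.Chain', List.isChain_append] at this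
    exact this.1
  refine ⟨?_, ?_, chain_link C1 hq.2.tail hE⟩
  · rcases l1 with _ | ⟨c, m⟩ <;> simpa using hp.1
  · rw [List.getLast?_append_cons]
    exact hq.1

theorem build_st {p q : List V} {a b : V × V}
    (hp : IsPathFrom E s p) (hpa : Traverses p a) (hpb : ¬ Traverses p b)
    (hq : IsPathTo E t q) (hqa : Traverses q a) (hqb : ¬ Traverses q b) :
    ∃ P, IsSTPath E s t P ∧ Traverses P a ∧ ¬ Traverses P b := by
  obtain ⟨l1, l2, rfl⟩ := (trav_iff _ _).1 hpa
  obtain ⟨m1, m2, rfl⟩ := (trav_iff _ _).1 hqa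
  have hp' : IsPathFrom E s (l1 ++ [a.1, a.2]) := by
    refine pathFrom_append_left (m2 := l2) ?_ (by simp)
    simpa using hp
  have hq' : IsPathTo E t (a.1 :: a.2 :: m2) := pathTo_append_right hq
  refine ⟨l1 ++ a.1 :: a.2 :: m2, glue_path hp' hq', (trav_iff _ _).2 ⟨l1, m2, rfl⟩, ?_⟩
  intro hb
  rcases trav_split l1 hb with h | h
  · apply hpb
    have := trav_append_left (l2 := a.2 :: l2) h
    simpa using this
  · exact hqb (trav_append_right (l1 := m1) h)


theorem exists_st_trav (hFG : IsFlowGraph E s t) {e : V × V} (he : E e.1 e.2) :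
    ∃ P, IsSTPath E s t P ∧ Traverses P e := by
  obtain ⟨p, hp, hv⟩ := hFG.2.2.2.2 e.1
  obtain ⟨q, hq, hw⟩ := hFG.2.2.2.2 e.2
  obtain ⟨l1, l2, rfl⟩ := List.append_of_mem hv
  obtain ⟨m1, m2, rfl⟩ := List.append_of_mem hw
  have C1 : List.Chain' E (l1 ++ [e.1]) := by
    have := hp.2.2
    rw [show l1 ++ e.1 :: l2 = (l1 ++ [e.1]) ++ l2 by simp, List.Chain', List.isChain_append] at this
    exact this.1
  have C2 : List.Chain' E (e.2 :: m2) := by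
    have := (List.isChain_append.mp hq.2.2).2.1
    exact this
  refine ⟨l1 ++ e.1 :: e.2 :: m2, ⟨?_, ?_, chain_link C1 C2 he⟩,
    (trav_iff _ _).2 ⟨l1, m2, rfl⟩⟩
  · rcases l1 with _ | ⟨c, m⟩ <;> simpa using hp.1
  · rw [List.getLast?_append_cons]
    have := hq.2.1
    rw [List.getLast?_append_cons] at this
    exact this

theorem edom_asymm {a b : V × V} (hab : EDom E s a b) (hba : EDom E s b a) (hne : a ≠ b)
    (hex : ∃ p, IsPathFrom E s p ∧ Traverses p b) : False := by
  obtain ⟨p0, hp0, hb0⟩ := hex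
  suffices h : ∀ n (p : List V), p.length ≤ n → IsPathFrom E s p → Traverses p b → False from
    h p0.length p0 le_rfl hp0 hb0
  intro n
  induction n with
  | zero =>
    intro p hl hp hb
    rw [List.length_eq_zero_iff.mp (Nat.le_zero.mp hl)] at hb
    exact trav_nil hb
  | succ n ih =>
    intro p hl hp hb
    have ha : Traverses p a := hab p hp hb
    obtain ⟨l1, l2, rfl⟩ := (trav_iff _ _).1 ha
    have hp' : IsPathFrom E s (l1 ++ [a.1, a.2]) := by
      refine pathFrom_append_left (m2 := l2) ?_ (by simp)
      simpa using hp
    have hb' : Traverses (l1 ++ [a.1, a.2]) b :=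
      hba _ hp' ((trav_iff _ _).2 ⟨l1, [], rfl⟩)
    obtain ⟨m1, m2, hm⟩ := (trav_iff _ _).1 hb'
    rcases m2 with _ | ⟨z, m2⟩
    · -- l1 ++ [a1,a2] = m1 ++ [b1,b2] forces a = b
      have := List.append_inj' (by simpa using hm) (by simp)
      have h2 : [a.1, a.2] = [b.1, b.2] := this.2
      simp at h2
      exact hne (Prod.ext h2.1 h2.2)
    · have hp'' : IsPathFrom E s (m1 ++ [b.1, b.2]) := by
        rw [hm] at hp'
        refine pathFrom_append_left (m2 := z :: m2) ?_ (by simp)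
        simpa using hp'
      refine ih (m1 ++ [b.1, b.2]) ?_ hp'' ((trav_iff _ _).2 ⟨m1, [], rfl⟩)
      have hlen := congrArg List.length hm
      have hl' : l1.length + (l2.length + 1 + 1) ≤ n + 1 := by simpa using hl
      simp at hlen ⊢
      omega

theorem epdom_asymm {a b : V × V} (hab : EPdom E t a b) (hba : EPdom E t b a) (hne : a ≠ b)
    (hex : ∃ p, IsPathTo E t p ∧ Traverses p b) : False := by
  obtain ⟨p0, hp0, hb0⟩ := hex
  suffices h : ∀ n (p : List V), p.length ≤ n → IsPathTo E t p → Traverses p b → False from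
    h p0.length p0 le_rfl hp0 hb0
  intro n
  induction n with
  | zero =>
    intro p hl hp hb
    rw [List.length_eq_zero_iff.mp (Nat.le_zero.mp hl)] at hb
    exact trav_nil hb
  | succ n ih =>
    intro p hl hp hb
    have ha : Traverses p a := hab p hp hb
    obtain ⟨l1, l2, rfl⟩ := (trav_iff _ _).1 ha
    have hp' : IsPathTo E t (a.1 :: a.2 :: l2) := pathTo_append_right hp
    have hb' : Traverses (a.1 :: a.2 :: l2) b :=
      hba _ hp' ((trav_iff _ _).2 ⟨[], l2, rfl⟩)
    obtain ⟨m1, m2, hm⟩ := (trav_iff _ _).1 hb'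
    rcases m1 with _ | ⟨z, m1⟩
    · simp at hm
      exact hne (Prod.ext hm.1 hm.2.1)
    · have hp'' : IsPathTo E t (b.1 :: b.2 :: m2) := by
        rw [hm] at hp'
        exact pathTo_append_right (m1 := z :: m1) hp'
      refine ih (b.1 :: b.2 :: m2) ?_ hp'' ((trav_iff _ _).2 ⟨[], m2, rfl⟩)
      have hlen := congrArg List.length hm
      have hl' : l1.length + (l2.length + 1 + 1) ≤ n + 1 := by simpa using hl
      simp at hlen ⊢
      omega


def StarEq (E : V → V → Prop) (s t : V) (a b : V × V) : Prop :=
  ∀ p, IsSTPath E s t p → (Traverses p a ↔ Traverses p b)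

theorem star_contra {a b : V × V} (hst : StarEq E s t a b)
    (hp : ∃ p, IsPathFrom E s p ∧ Traverses p a ∧ ¬Traverses p b)
    (hq : ∃ q, IsPathTo E t q ∧ Traverses q a ∧ ¬Traverses q b) : False := by
  obtain ⟨p, hp1, hp2, hp3⟩ := hp
  obtain ⟨q, hq1, hq2, hq3⟩ := hq
  obtain ⟨P, hP1, hP2, hP3⟩ := build_st hp1 hp2 hp3 hq1 hq2 hq3
  exact hP3 ((hst P hP1).1 hP2)

theorem star_half (hFG : IsFlowGraph E s t) {a b : V × V} (hst : StarEq E s t a b)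
    (hb : E b.1 b.2) (hne : a ≠ b) (hnpd : ¬ EPdom E t b a) :
    EDom E s b a ∧ EPdom E t a b := by
  rw [EPdom] at hnpd
  push_neg at hnpd
  obtain ⟨q, hq1, hq2, hq3⟩ := hnpd
  have hdba : EDom E s b a := by
    intro p hp hpa
    by_contra hpb
    exact star_contra hst ⟨p, hp, hpa, hpb⟩ ⟨q, hq1, hq2, hq3⟩
  refine ⟨hdba, ?_⟩
  intro r hr hrb
  by_contra hra
  have hst' : StarEq E s t b a := fun p hp => (hst p hp).symm
  have hdab : EDom E s a b := by
    intro w hw hwb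
    by_contra hwa
    exact star_contra hst' ⟨w, hw, hwb, hwa⟩ ⟨r, hr, hrb, hra⟩
  obtain ⟨P, hP, hPb⟩ := exists_st_trav hFG hb
  exact edom_asymm hdab hdba hne ⟨P, ⟨hP.1, hP.2.2⟩, hPb⟩

theorem star_comparable (hFG : IsFlowGraph E s t) {a b : V × V} (hst : StarEq E s t a b)
    (ha : E a.1 a.2) (hb : E b.1 b.2) (hne : a ≠ b) :
    (EDom E s a b ∧ EPdom E t b a) ∨ (EDom E s b a ∧ EPdom E t a b) := by
  by_cases h1 : EPdom E t b a
  · by_cases h2 : EPdom E t a b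
    · exfalso
      obtain ⟨P, hP, hPb⟩ := exists_st_trav hFG hb
      exact epdom_asymm h2 h1 hne ⟨P, ⟨hP.2.1, hP.2.2⟩, hPb⟩
    · exact Or.inl (star_half hFG (fun p hp => (hst p hp).symm) ha hne.symm h2)
  · exact Or.inr (star_half hFG hst hb hne h1)

theorem sese_star_out {e a b : V × V} (h1 : SESE E s t e a) (h2 : SESE E s t e b) :
    StarEq E s t a b := by
  intro p hp
  constructor
  · intro h
    exact h2.2.1 p ⟨hp.2.1, hp.2.2⟩ (h1.1 p ⟨hp.1, hp.2.2⟩ h)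
  · intro h
    exact h1.2.1 p ⟨hp.2.1, hp.2.2⟩ (h2.1 p ⟨hp.1, hp.2.2⟩ h)

theorem sese_star_in {e a b : V × V} (h1 : SESE E s t a e) (h2 : SESE E s t b e) :
    StarEq E s t a b := by
  intro p hp
  constructor
  · intro h
    exact h2.1 p ⟨hp.1, hp.2.2⟩ (h1.2.1 p ⟨hp.2.1, hp.2.2⟩ h)
  · intro h
    exact h1.1 p ⟨hp.1, hp.2.2⟩ (h2.2.1 p ⟨hp.2.1, hp.2.2⟩ h)

theorem sarc_comparable_of_star (hFG : IsFlowGraph E s t) {a b : V × V}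
    (hst : StarEq E s t a b) (ha : E a.1 a.2) (hb : E b.1 b.2) (hne : a ≠ b)
    (hcyc : ∀ c, IsCycle E c → (CycTraverses c a ↔ CycTraverses c b)) :
    SArc E s t a b ∨ SArc E s t b a := by
  rcases star_comparable hFG hst ha hb hne with ⟨hd, hp⟩ | ⟨hd, hp⟩
  · exact Or.inl ⟨ha, hb, hne, hd, hp, hcyc⟩
  · exact Or.inr ⟨hb, ha, hne.symm, hd, hp, fun c hc => (hcyc c hc).symm⟩

theorem sarc_out (hFG : IsFlowGraph E s t) {e a b : V × V}
    (h1 : SArc E s t e a) (h2 : SArc E s t e b) (hne : a ≠ b) :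
    SArc E s t a b ∨ SArc E s t b a :=
  sarc_comparable_of_star hFG (sese_star_out h1.2.2.2 h2.2.2.2) h1.2.1 h2.2.1 hne
    (fun c hc => ((h1.2.2.2.2.2 c hc).symm).trans (h2.2.2.2.2.2 c hc))

theorem sarc_in (hFG : IsFlowGraph E s t) {e a b : V × V}
    (h1 : SArc E s t a e) (h2 : SArc E s t b e) (hne : a ≠ b) :
    SArc E s t a b ∨ SArc E s t b a :=
  sarc_comparable_of_star hFG (sese_star_in h1.2.2.2 h2.2.2.2) h1.1 h2.1 hne
    (fun c hc => (h1.2.2.2.2.2 c hc).trans (h2.2.2.2.2.2 c hc).symm)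

theorem sarc_asymm (hFG : IsFlowGraph E s t) {a b : V × V}
    (h1 : SArc E s t a b) (h2 : SArc E s t b a) : False := by
  obtain ⟨P, hP, hPb⟩ := exists_st_trav hFG h1.2.1
  exact edom_asymm h1.2.2.2.1 h2.2.2.2.1 h1.2.2.1 ⟨P, ⟨hP.1, hP.2.2⟩, hPb⟩

theorem sarc_trans (hFG : IsFlowGraph E s t) {a b c : V × V}
    (h1 : SArc E s t a b) (h2 : SArc E s t b c) : SArc E s t a c := by
  obtain ⟨hEa, hEb, hab, hd1, hp1, hc1⟩ := h1
  obtain ⟨_, hEc, hbc, hd2, hp2, hc2⟩ := h2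
  have hac : a ≠ c := by
    rintro rfl
    obtain ⟨P, hP, hPb⟩ := exists_st_trav hFG hEb
    exact edom_asymm hd1 hd2 hab ⟨P, ⟨hP.1, hP.2.2⟩, hPb⟩
  exact ⟨hEa, hEc, hac, fun p hp h => hd1 p hp (hd2 p hp h),
    fun p hp h => hp2 p hp (hp1 p hp h), fun cy hcy => (hc1 cy hcy).trans (hc2 cy hcy)⟩


theorem list_min {α : Type*} (P : α → Prop) (R : α → α → Prop)
    (htot : ∀ a b, P a → P b → a ≠ b → R a b ∨ R b a)
    (htr : ∀ a b c, R a b → R b c → R a c) :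
    ∀ l : List α, l ≠ [] → (∀ x ∈ l, P x) → ∃ a ∈ l, ∀ b ∈ l, b ≠ a → R a b := by
  intro l
  induction l with
  | nil => intro h; exact absurd rfl h
  | cons x l ih =>
    intro _ hP
    by_cases hl : l = []
    · subst hl
      refine ⟨x, by simp, ?_⟩
      intro b hb hbx
      simp at hb
      exact absurd hb hbx
    · obtain ⟨a, hal, hmin⟩ := ih hl (fun y hy => hP y (List.mem_cons_of_mem _ hy))
      by_cases hxa : x = a
      · refine ⟨a, List.mem_cons_of_mem _ hal, ?_⟩
        intro b hb hba
        rcases List.mem_cons.mp hb with rfl | hbl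
        · exact absurd hxa hba
        · exact hmin b hbl hba
      · rcases htot x a (hP x (List.mem_cons_self)) (hP a (List.mem_cons_of_mem _ hal)) hxa with hR | hR
        · refine ⟨x, List.mem_cons_self, ?_⟩
          intro b hb hbx
          rcases List.mem_cons.mp hb with rfl | hbl
          · exact absurd rfl hbx
          · by_cases hba : b = a
            · rw [hba]; exact hR
            · exact htr x a b hR (hmin b hbl hba)
        · refine ⟨a, List.mem_cons_of_mem _ hal, ?_⟩
          intro b hb hba
          rcases List.mem_cons.mp hb with rfl | hbl
          · exact hR
          · exact hmin b hbl hba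

end Aux

/-- Every weakly connected component of `S` containing at least one arc is a transitive
tournament; in particular it has a unique source, a unique target, and the unique
length-1 path from its source to its target (an arc from the source to the target). -/
theorem stmt12 {V : Type*} [Fintype V] (E : V → V → Prop) (s t : V)
    (hFG : IsFlowGraph E s t) (e0 : V × V)
    (harc : ∃ e', SArc E s t e0 e' ∨ SArc E s t e' e0) :
    (∀ a b, WConn (SArc E s t) e0 a → WConn (SArc E s t) e0 b → a ≠ b →
      (SArc E s t a b ∨ SArc E s t b a) ∧ ¬(SArc E s t a b ∧ SArc E s t b a)) ∧
    (∀ a b c, WConn (SArc E s t) e0 a → WConn (SArc E s t) e0 b →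
      WConn (SArc E s t) e0 c → SArc E s t a b → SArc E s t b c → SArc E s t a c) ∧
    (∃! a, WConn (SArc E s t) e0 a ∧ ∀ b, WConn (SArc E s t) e0 b → ¬SArc E s t b a) ∧
    (∃! b, WConn (SArc E s t) e0 b ∧ ∀ a, WConn (SArc E s t) e0 a → ¬SArc E s t b a) ∧
    (∀ a b, (WConn (SArc E s t) e0 a ∧ ∀ c, WConn (SArc E s t) e0 c → ¬SArc E s t c a) →
      (WConn (SArc E s t) e0 b ∧ ∀ c, WConn (SArc E s t) e0 c → ¬SArc E s t b c) →
      SArc E s t a b) := by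

  classical
  set S := SArc E s t with hS
  set W : V × V → Prop := WConn (SArc E s t) e0 with hW
  have hasym : ∀ a b, S a b → S b a → False := fun _ _ h1 h2 => sarc_asymm hFG h1 h2
  have htr : ∀ a b c, S a b → S b c → S a c := fun _ _ _ h1 h2 => sarc_trans hFG h1 h2
  have hQ : ∀ a, W a → (S e0 a ∨ S a e0 ∨ a = e0) := by
    intro a h
    induction h with
    | refl => exact Or.inr (Or.inr rfl)
    | @tail b c hwb hstep ih =>
      rcases ih with hb | hb | rfl
      · rcases hstep with h | h
        · exact Or.inl (htr _ _ _ hb h)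
        · by_cases hce : c = e0
          · exact Or.inr (Or.inr hce)
          · rcases sarc_in hFG hb h (fun hh => hce hh.symm) with h' | h'
            · exact Or.inl h'
            · exact Or.inr (Or.inl h')
      · rcases hstep with h | h
        · by_cases hce : c = e0
          · exact Or.inr (Or.inr hce)
          · rcases sarc_out hFG hb h (fun hh => hce hh.symm) with h' | h'
            · exact Or.inl h'
            · exact Or.inr (Or.inl h')
        · exact Or.inr (Or.inl (htr _ _ _ h hb))
      · rcases hstep with h | h
        · exact Or.inl h
        · exact Or.inr (Or.inl h)
  have htot : ∀ a b, W a → W b → a ≠ b → S a b ∨ S b a := by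
    intro a b ha hb hne
    rcases hQ a ha with h1 | h1 | rfl
    · rcases hQ b hb with h2 | h2 | rfl
      · exact sarc_out hFG h1 h2 hne
      · exact Or.inr (htr _ _ _ h2 h1)
      · exact Or.inr h1
    · rcases hQ b hb with h2 | h2 | rfl
      · exact Or.inl (htr _ _ _ h1 h2)
      · exact sarc_in hFG h1 h2 hne
      · exact Or.inl h1
    · rcases hQ b hb with h2 | h2 | rfl
      · exact Or.inl h2
      · exact Or.inr h2
      · exact absurd rfl hne
  have W_e0 : W e0 := Relation.ReflTransGen.refl
  obtain ⟨e1, harc'⟩ := harc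
  have W_e1 : W e1 := Relation.ReflTransGen.single harc'
  have hne01 : e0 ≠ e1 := by
    rcases harc' with h | h
    · exact h.2.2.1
    · exact fun hh => h.2.2.1 hh.symm
  have hother : ∀ a, ∃ c, W c ∧ c ≠ a := by
    intro a
    by_cases h : a = e0
    · exact ⟨e1, W_e1, fun hh => hne01 (h ▸ hh.symm)⟩
    · exact ⟨e0, W_e0, fun hh => h hh.symm⟩
  -- enumerate the component
  let l : List (V × V) := (Finset.univ.filter W).toList
  have hlmem : ∀ x, x ∈ l ↔ W x := by
    intro x; simp [l]
  have hlne : l ≠ [] := by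
    intro h
    have := (hlmem e0).2 W_e0
    rw [h] at this
    simp at this
  obtain ⟨m, hml, hm⟩ := list_min W S htot htr l hlne (fun x hx => (hlmem x).1 hx)
  obtain ⟨M, hMl, hMx⟩ := list_min W (fun a b => S b a)
    (fun a b pa pb hne => (htot a b pa pb hne).symm)
    (fun a b c h1 h2 => htr _ _ _ h2 h1) l hlne (fun x hx => (hlmem x).1 hx)
  have hmW : W m := (hlmem m).1 hml
  have hMW : W M := (hlmem M).1 hMl
  have hmin : ∀ b, W b → b ≠ m → S m b := fun b hb hne => hm b ((hlmem b).2 hb) hne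
  have hmax : ∀ b, W b → b ≠ M → S b M := fun b hb hne => hMx b ((hlmem b).2 hb) hne
  have hm_src : ∀ b, W b → ¬ S b m := by
    intro b hb hSbm
    exact hasym _ _ (hmin b hb hSbm.2.2.1) hSbm
  have hM_tgt : ∀ a, W a → ¬ S M a := by
    intro a ha hSMa
    exact hasym _ _ hSMa (hmax a ha (fun hh => hSMa.2.2.1 hh.symm))
  refine ⟨fun a b ha hb hne => ⟨htot a b ha hb hne, fun ⟨h1, h2⟩ => hasym _ _ h1 h2⟩,
    fun a b c _ _ _ h1 h2 => htr _ _ _ h1 h2, ⟨m, ⟨hmW, hm_src⟩, ?_⟩, ⟨M, ⟨hMW, hM_tgt⟩, ?_⟩, ?_⟩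
  · rintro y ⟨hyW, hy⟩
    by_contra hne
    rcases htot y m hyW hmW hne with h | h
    · exact hm_src y hyW h
    · exact hy m hmW h
  · rintro y ⟨hyW, hy⟩
    by_contra hne
    rcases htot y M hyW hMW hne with h | h
    · exact hy M hMW h
    · exact hM_tgt y hyW h
  · rintro a b ⟨haW, ha⟩ ⟨hbW, hb⟩
    have hne : a ≠ b := by
      rintro rfl
      obtain ⟨c, hcW, hca⟩ := hother a
      rcases htot a c haW hcW (fun hh => hca hh.symm) with h | h
      · exact hb c hcW h
      · exact ha c hcW h
    rcases htot a b haW hbW hne with h | h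
    · exact h
    · exact absurd h (ha b hbW)
end
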